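/- Assume that Ω^1_{R/K} is a free R-module with basis dx^1,…,dx^d, and for f ∈ R let ∂_{x^a}f ∈ R be the unique elements with df = Σ_a (∂_{x^a}f)·dx^a. Then for every f ∈ R and every c ∈ {1,…,d}, the identity ∂_{t^c} I(f) = Σ_{a=1}^d I(∂_{x^a}f) · ∂_{t^c} I(x^a) holds in R^𝐝[[t^1,…,t^d]]. Equivalently, for every multi-index k: (k(c)+1) · f_{k+e_c} = Σ_{a=1}^d Σ_{i+j=k} (∂_{x^a}f)_i · (j(c)+1) · (x^a)_{j+e_c}, where g_0 := g for g ∈ R. -/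

import Mathlib

namespace Paper

/-- Multi-indices: finitely supported functions `Fin d → ℕ`. -/
abbrev MIdx (d : ℕ) := Fin d →₀ ℕ

/-- The length `|i|` of a multi-index. -/
def deg {d : ℕ} (i : MIdx d) : ℕ := i.sum fun _ n => n

variable (K R : Type) [Field K] [CharZero K] [CommRing R] [Algebra K R]

/-- The defining relations of the algebra `R^𝐝`. -/
def relSet (d : ℕ) : Set (MvPolynomial (R × MIdx d) R) :=
  {p | (∃ f g : R, ∃ i : MIdx d,
          p = MvPolynomial.X (f + g, i) - MvPolynomial.X (f, i) - MvPolynomial.X (g, i)) ∨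
       (∃ f g : R, ∃ i : MIdx d,
          p = MvPolynomial.X (f * g, i) -
            ∑ q ∈ Finset.HasAntidiagonal.antidiagonal i, MvPolynomial.X (f, q.1) * MvPolynomial.X (g, q.2)) ∨
       (∃ f : R, p = MvPolynomial.X (f, (0 : MIdx d)) - MvPolynomial.C f) ∨
       (∃ (c : K) (i : MIdx d), 1 ≤ deg i ∧ p = MvPolynomial.X (algebraMap K R c, i))}

/-- The commutative `R`-algebra `R^𝐝` generated by the symbols `f_i`. -/
def Rd (d : ℕ) : Type :=
  MvPolynomial (R × MIdx d) R ⧸ Ideal.span (relSet K R d)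

noncomputable instance (d : ℕ) : CommRing (Rd K R d) := Ideal.Quotient.commRing _
noncomputable instance (d : ℕ) : Algebra R (Rd K R d) := Ideal.Quotient.algebra R
noncomputable instance (d : ℕ) : Algebra K (Rd K R d) := Ideal.Quotient.algebra K

/-- The generator `f_i` of `R^𝐝`. -/
noncomputable def gen {d : ℕ} (f : R) (i : MIdx d) : Rd K R d :=
  Ideal.Quotient.mk (Ideal.span (relSet K R d)) (MvPolynomial.X (f, i))

/-- The Taylor series `I(f) = Σ_i f_i t^i ∈ R^𝐝[[t^1,…,t^d]]`. -/
noncomputable def Ifun {d : ℕ} (f : R) : MvPowerSeries (Fin d) (Rd K R d) :=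
  fun i => gen K R f i

end Paper

namespace Paper

/-- The formal partial derivative `∂_{t^c}` on multivariate power series,
defined coefficientwise: the coefficient of `t^k` in `∂_{t^c} F` is `(k(c)+1)`
times the coefficient of `t^{k+e_c}` in `F`. -/
noncomputable def ptderiv {A : Type} [CommRing A] {d : ℕ} (c : Fin d)
    (F : MvPowerSeries (Fin d) A) : MvPowerSeries (Fin d) A :=
  fun k => (k c + 1 : ℕ) • MvPowerSeries.coeff (R := A) (k + Finsupp.single c 1) F

end Paper

namespace Paper

section Aux
set_option synthInstance.maxHeartbeats 1000000
set_option maxHeartbeats 1000000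
set_option linter.unusedSectionVars false

variable {A : Type} [CommRing A] {d : ℕ}

lemma coeff_ptderiv (c : Fin d) (F : MvPowerSeries (Fin d) A) (k : MIdx d) :
    MvPowerSeries.coeff (R := A) k (ptderiv c F) =
      (k c + 1 : ℕ) • MvPowerSeries.coeff (R := A) (k + Finsupp.single c 1) F := rfl

lemma sum_antidiag_swap {M : Type} [AddCommMonoid M] (n : MIdx d)
    (f : MIdx d × MIdx d → M) :
    ∑ p ∈ Finset.HasAntidiagonal.antidiagonal n, f p = ∑ p ∈ Finset.HasAntidiagonal.antidiagonal n, f p.swap := by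
  refine Finset.sum_nbij' Prod.swap Prod.swap ?_ ?_ ?_ ?_ ?_ <;>
    simp [Finset.swap_mem_antidiagonal] <;>
    intro a b hab <;> rw [add_comm] <;> exact hab

lemma shift_sum {M : Type} [AddCommMonoid M] (c : Fin d) (k : MIdx d)
    (h : MIdx d → MIdx d → M) :
    ((Finset.HasAntidiagonal.antidiagonal k).sum
        (fun p : MIdx d × MIdx d => (p.2 c + 1) • h p.1 (p.2 + Finsupp.single c 1))) =
      ((Finset.HasAntidiagonal.antidiagonal (k + Finsupp.single c 1)).sum
        (fun p : MIdx d × MIdx d => (p.2 c) • h p.1 p.2)) := by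
  have step1 : ((Finset.HasAntidiagonal.antidiagonal k).sum
        (fun p : MIdx d × MIdx d => (p.2 c + 1) • h p.1 (p.2 + Finsupp.single c 1))) =
      (((Finset.HasAntidiagonal.antidiagonal (k + Finsupp.single c 1)).filter
          (fun p : MIdx d × MIdx d => p.2 c ≠ 0)).sum
        (fun p : MIdx d × MIdx d => (p.2 c) • h p.1 p.2)) := by
    refine Finset.sum_nbij' (i := fun p => (p.1, p.2 + Finsupp.single c 1))
        (j := fun q => (q.1, q.2 - Finsupp.single c 1)) ?_ ?_ ?_ ?_ ?_
    · intro p hp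
      rw [Finset.HasAntidiagonal.mem_antidiagonal] at hp
      rw [Finset.mem_filter, Finset.HasAntidiagonal.mem_antidiagonal]
      constructor
      · rw [← add_assoc, hp]
      · simp
    · intro q hq
      rw [Finset.mem_filter, Finset.HasAntidiagonal.mem_antidiagonal] at hq
      obtain ⟨hq1, hq2⟩ := hq
      have hle : Finsupp.single c 1 ≤ q.2 := by
        rw [Finsupp.single_le_iff]; omega
      rw [Finset.HasAntidiagonal.mem_antidiagonal]
      have : q.1 + (q.2 - Finsupp.single c 1) + Finsupp.single c 1
          = k + Finsupp.single c 1 := by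
        rw [add_assoc, tsub_add_cancel_of_le hle, hq1]
      exact add_right_cancel this
    · intro p hp; simp
    · intro q hq
      dsimp only at hq ⊢
      rw [Finset.mem_filter, Finset.HasAntidiagonal.mem_antidiagonal] at hq
      have hle : Finsupp.single c 1 ≤ q.2 := by
        rw [Finsupp.single_le_iff]; omega
      rw [Prod.ext_iff]
      exact ⟨rfl, tsub_add_cancel_of_le hle⟩
    · intro p hp
      dsimp only
      have hcoord : ((p.2 + Finsupp.single c 1) : MIdx d) c = p.2 c + 1 := by simp
      rw [hcoord]
  rw [step1]
  refine Finset.sum_filter_of_ne ?_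
  intro p _ hne h0
  rw [h0, zero_smul] at hne
  exact hne rfl

lemma ptderiv_mul (c : Fin d) (F G : MvPowerSeries (Fin d) A) :
    ptderiv c (F * G) = F * ptderiv c G + G * ptderiv c F := by
  ext k
  rw [map_add, MvPowerSeries.coeff_mul, MvPowerSeries.coeff_mul, coeff_ptderiv,
    MvPowerSeries.coeff_mul]
  simp only [coeff_ptderiv]
  have lhs : (k c + 1 : ℕ) • ((Finset.HasAntidiagonal.antidiagonal (k + Finsupp.single c 1)).sum
        (fun p : MIdx d × MIdx d =>
          MvPowerSeries.coeff (R := A) p.1 F * MvPowerSeries.coeff (R := A) p.2 G))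
      = ((Finset.HasAntidiagonal.antidiagonal (k + Finsupp.single c 1)).sum
          (fun p : MIdx d × MIdx d =>
            (p.2 c) • (MvPowerSeries.coeff (R := A) p.1 F * MvPowerSeries.coeff (R := A) p.2 G))) +
        ((Finset.HasAntidiagonal.antidiagonal (k + Finsupp.single c 1)).sum
          (fun p : MIdx d × MIdx d =>
            (p.1 c) • (MvPowerSeries.coeff (R := A) p.1 F * MvPowerSeries.coeff (R := A) p.2 G))) := by
    rw [Finset.smul_sum, ← Finset.sum_add_distrib]
    refine Finset.sum_congr rfl fun p hp => ?_
    rw [Finset.HasAntidiagonal.mem_antidiagonal] at hp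
    have h1 : p.1 c + p.2 c = k c + 1 := by
      have := congrArg (fun m : MIdx d => m c) hp
      simpa using this
    rw [← add_smul]; congr 1; omega
  rw [lhs]
  congr 1
  · rw [← shift_sum c k (fun i j => MvPowerSeries.coeff (R := A) i F * MvPowerSeries.coeff (R := A) j G)]
    refine Finset.sum_congr rfl fun p _ => ?_
    rw [mul_smul_comm]
  · rw [sum_antidiag_swap (k + Finsupp.single c 1)
      (fun p : MIdx d × MIdx d =>
        (p.1 c) • (MvPowerSeries.coeff (R := A) p.1 F * MvPowerSeries.coeff (R := A) p.2 G))]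
    simp only [Prod.snd_swap, Prod.fst_swap]
    rw [← shift_sum c k (fun i j => MvPowerSeries.coeff (R := A) j F * MvPowerSeries.coeff (R := A) i G)]
    refine Finset.sum_congr rfl fun p _ => ?_
    rw [mul_smul_comm, mul_comm (MvPowerSeries.coeff (R := A) p.1 G)]

lemma ptderiv_add (c : Fin d) (F G : MvPowerSeries (Fin d) A) :
    ptderiv c (F + G) = ptderiv c F + ptderiv c G := by
  ext k
  rw [map_add, coeff_ptderiv, coeff_ptderiv, coeff_ptderiv, map_add, smul_add]

variable (K R : Type) [Field K] [CharZero K] [CommRing R] [Algebra K R] (d : ℕ)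

lemma mk_rel {p : MvPolynomial (R × MIdx d) R} (hp : p ∈ relSet K R d) :
    Ideal.Quotient.mk (Ideal.span (relSet K R d)) p = 0 :=
  Ideal.Quotient.eq_zero_iff_mem.2 (Ideal.subset_span hp)

lemma gen_add (f g : R) (i : MIdx d) :
    gen K R (f + g) i = gen K R f i + gen K R g i := by
  have h := mk_rel K R d (p := MvPolynomial.X (f + g, i) - MvPolynomial.X (f, i)
    - MvPolynomial.X (g, i)) (Or.inl ⟨f, g, i, rfl⟩)
  simp only [map_sub] at h
  unfold gen
  rw [sub_sub, sub_eq_zero] at h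
  exact h

lemma gen_mul (f g : R) (i : MIdx d) :
    gen K R (f * g) i =
      ∑ q ∈ Finset.HasAntidiagonal.antidiagonal i, gen K R f q.1 * gen K R g q.2 := by
  have h := mk_rel K R d (p := MvPolynomial.X (f * g, i) -
      ∑ q ∈ Finset.HasAntidiagonal.antidiagonal i, MvPolynomial.X (f, q.1) * MvPolynomial.X (g, q.2))
    (Or.inr (Or.inl ⟨f, g, i, rfl⟩))
  simp only [map_sub, map_sum, map_mul] at h
  unfold gen
  rw [sub_eq_zero] at h
  exact h

lemma gen_zero_idx (f : R) :
    gen K R (d := d) f 0 = algebraMap R (Rd K R d) f := by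
  have h := mk_rel K R d (p := MvPolynomial.X (f, (0 : MIdx d)) - MvPolynomial.C f)
    (Or.inr (Or.inr (Or.inl ⟨f, rfl⟩)))
  simp only [map_sub] at h
  have h2 : algebraMap R (Rd K R d) f
      = Ideal.Quotient.mk (Ideal.span (relSet K R d)) (MvPolynomial.C f) := rfl
  rw [h2]; unfold gen; linear_combination h

lemma deg_pos_of_ne_zero {i : MIdx d} (h : i ≠ 0) : 1 ≤ deg i := by
  rcases Finsupp.ne_iff.1 h with ⟨a, ha⟩
  simp only [Finsupp.coe_zero, Pi.zero_apply] at ha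
  have ha' : a ∈ i.support := Finsupp.mem_support_iff.2 ha
  calc 1 ≤ i a := Nat.one_le_iff_ne_zero.2 ha
    _ ≤ deg i := Finset.single_le_sum (f := fun b => i b) (fun _ _ => Nat.zero_le _) ha'

lemma gen_algebraMap (c : K) {i : MIdx d} (h : i ≠ 0) :
    gen K R (algebraMap K R c) i = 0 :=
  mk_rel K R d (Or.inr (Or.inr (Or.inr ⟨c, i, deg_pos_of_ne_zero d h, rfl⟩)))

lemma coeff_Ifun (f : R) (k : MIdx d) :
    MvPowerSeries.coeff (R := Rd K R d) k (Ifun K R f) = gen K R f k := rfl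

/-- `I` as a `K`-algebra homomorphism. -/
noncomputable def Ialg : R →ₐ[K] MvPowerSeries (Fin d) (Rd K R d) where
  toFun f := Ifun K R f
  map_one' := by
    ext k
    rw [coeff_Ifun, MvPowerSeries.coeff_one]
    by_cases hk : k = 0
    · subst hk; simp [gen_zero_idx]
    · rw [if_neg hk]
      have h1 : (1 : R) = algebraMap K R 1 := by simp
      rw [h1, gen_algebraMap K R d _ hk]
  map_mul' f g := by
    ext k
    rw [coeff_Ifun, MvPowerSeries.coeff_mul, gen_mul]
    rfl
  map_zero' := by
    ext k
    rw [coeff_Ifun, map_zero]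
    have h0 : (0 : R) = algebraMap K R 0 := by simp
    by_cases hk : k = 0
    · subst hk; rw [gen_zero_idx]; simp
    · rw [h0, gen_algebraMap K R d _ hk]
  map_add' f g := by
    ext k
    rw [coeff_Ifun, map_add, gen_add]
    rfl
  commutes' c := by
    ext k
    rw [coeff_Ifun, MvPowerSeries.algebraMap_apply, MvPowerSeries.coeff_C]
    by_cases hk : k = 0
    · subst hk
      rw [if_pos rfl, gen_zero_idx]
      rfl
    · rw [if_neg hk, gen_algebraMap K R d _ hk]

/-- Type synonym for `MvPowerSeries (Fin d) (Rd K R d)` carrying the `R`-module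
structure induced by `Ialg`. -/
def Md : Type := MvPowerSeries (Fin d) (Rd K R d)

noncomputable instance : CommRing (Md K R d) :=
  inferInstanceAs (CommRing (MvPowerSeries (Fin d) (Rd K R d)))
noncomputable instance : Algebra K (Md K R d) :=
  inferInstanceAs (Algebra K (MvPowerSeries (Fin d) (Rd K R d)))
noncomputable instance : Algebra R (Md K R d) :=
  RingHom.toAlgebra ((Ialg K R d).toRingHom :
    R →+* MvPowerSeries (Fin d) (Rd K R d))
noncomputable instance : IsScalarTower K R (Md K R d) :=
  IsScalarTower.of_algebraMap_eq' ((Ialg K R d).comp_algebraMap).symm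

/-- Identity cast into the type synonym. -/
def toMd : MvPowerSeries (Fin d) (Rd K R d) → Md K R d := id

lemma algebraMap_Md (f : R) :
    (algebraMap R (Md K R d) f : MvPowerSeries (Fin d) (Rd K R d)) = Ifun K R f := rfl

lemma ptderiv_one (c : Fin d) :
    ptderiv c (1 : MvPowerSeries (Fin d) A) = 0 := by
  ext k
  rw [coeff_ptderiv, MvPowerSeries.coeff_one, map_zero]
  have : k + Finsupp.single c 1 ≠ 0 := by
    intro h0
    have := congrArg (fun m : MIdx d => m c) h0
    simp at this
  rw [if_neg this, smul_zero]

/-- The derivation `f ↦ ∂_{t^c} I(f)`. -/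
noncomputable def Dc (c : Fin d) : Derivation K R (Md K R d) where
  toFun f := (ptderiv c (Ifun K R f) : MvPowerSeries (Fin d) (Rd K R d))
  map_add' f g := by
    show ptderiv c (Ifun K R (f + g)) = ptderiv c (Ifun K R f) + ptderiv c (Ifun K R g)
    have : Ifun K R (d := d) (f + g) = Ifun K R f + Ifun K R g := map_add (Ialg K R d) f g
    rw [this, ptderiv_add]
  map_smul' a f := by
    show ptderiv c (Ifun K R (a • f)) = a • ptderiv c (Ifun K R f)
    have h1 : Ifun K R (d := d) (a • f) = a • Ifun K R f := map_smul (Ialg K R d) a f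
    rw [h1]
    have hsm : ∀ (b : K) (F : MvPowerSeries (Fin d) (Rd K R d)) (k : MIdx d),
        MvPowerSeries.coeff (R := Rd K R d) k (b • F) = b • MvPowerSeries.coeff (R := Rd K R d) k F :=
      fun _ _ _ => rfl
    ext k
    rw [coeff_ptderiv, hsm, hsm, coeff_ptderiv, smul_comm]
  map_one_eq_zero' := by
    show ptderiv c (Ifun K R (1 : R)) = 0
    have : Ifun K R (d := d) (1 : R) = 1 := map_one (Ialg K R d)
    rw [this, ptderiv_one]
  leibniz' f g := by
    have h2 : ∀ (r : R) (m : Md K R d),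
        r • m = toMd K R d (Ifun K R r) * m := fun r m => Algebra.smul_def r m
    rw [h2, h2]
    show ptderiv c (Ifun K R (f * g)) =
      Ifun K R f * ptderiv c (Ifun K R g) + Ifun K R g * ptderiv c (Ifun K R f)
    have h1 : Ifun K R (d := d) (f * g) = Ifun K R f * Ifun K R g := map_mul (Ialg K R d) f g
    rw [h1]
    exact ptderiv_mul c (Ifun K R f) (Ifun K R g)

end Aux
end Paper

/-- The chain rule in `R^𝐝[[t]]`:
`∂_{t^c} I(f) = Σ_a I(∂_{x^a} f) · ∂_{t^c} I(x^a)`. -/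
theorem statement10 (K R : Type) [Field K] [CharZero K] [CommRing R] [Algebra K R]
    (d : ℕ) (hd : 1 ≤ d) (x : Fin d → R)
    (b : Module.Basis (Fin d) R (KaehlerDifferential K R))
    (hb : ∀ a : Fin d, b a = KaehlerDifferential.D K R (x a))
    (pd : Fin d → R → R)
    (hpd : ∀ g : R, KaehlerDifferential.D K R g =
      ∑ a : Fin d, pd a g • KaehlerDifferential.D K R (x a)) :
    ∀ (f : R) (c : Fin d),
      Paper.ptderiv c (Paper.Ifun K R (d := d) f) =
        ∑ a : Fin d,
          Paper.Ifun K R (pd a f) * Paper.ptderiv c (Paper.Ifun K R (x a)) := by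
  intro f c
  set D := Paper.Dc K R d c with hD
  set L := D.liftKaehlerDifferential with hL
  have key : ∀ g : R, D g = L (KaehlerDifferential.D K R g) := fun g =>
    (Derivation.liftKaehlerDifferential_comp_D D g).symm
  have main : D f = ∑ a : Fin d, pd a f • D (x a) := by
    rw [key f, hpd f, map_sum]
    refine Finset.sum_congr rfl fun a _ => ?_
    rw [map_smul, ← key (x a)]
  have smul_eq : ∀ (r : R) (m : Paper.Md K R d),
      r • m = Paper.toMd K R d (Paper.Ifun K R r) * m := fun r m =>
    Algebra.smul_def r m
  have main2 : D f = ∑ a : Fin d, Paper.toMd K R d (Paper.Ifun K R (pd a f)) * D (x a) := by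
    rw [main]
    exact Finset.sum_congr rfl fun a _ => smul_eq (pd a f) (D (x a))
  exact main2
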